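/- Let M be a compact metric space with metric d and φ: M → M continuous. If G = {G_n} is an asymptotically additive sequence of bounded Borel functions on M, then G has tempered variation: lim_{δ↓0} limsup_{n→∞} sup_{x∈M} sup_{y,z ∈ B_n(x,δ)} (1/n)|G_n(y) − G_n(z)| = 0. -/

import Mathlib

open MeasureTheory Filter Topology Set
open scoped ENNReal

variable {M : Type*} [MetricSpace M] [CompactSpace M] [MeasurableSpace M] [BorelSpace M]

/-- Birkhoff sum `S_n V = ∑_{j<n} V ∘ φ^j`. -/
noncomputable def birkhoff (φ : M → M) (V : M → ℝ) (n : ℕ) (x : M) : ℝ :=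
  ∑ j ∈ Finset.range n, V (φ^[j] x)

/-- Supremum norm `‖f‖_∞` valued in `ℝ≥0∞`. -/
noncomputable def supNorm (f : M → ℝ) : ℝ≥0∞ :=
  ⨆ x : M, ENNReal.ofReal |f x|

/-- `Gk` is an approximating sequence for `G`:
`lim_{k→∞} limsup_{n→∞} (1/n) ‖G_n − S_n G^{(k)}‖_∞ = 0`. -/
def ApproxSeq (φ : M → M) (G : ℕ → M → ℝ) (Gk : ℕ → M → ℝ) : Prop :=
  Tendsto
    (fun k => Filter.limsup
      (fun n => supNorm (fun x => G n x - birkhoff φ (Gk k) n x) / (n : ℝ≥0∞)) atTop)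
    atTop (nhds 0)

/-- `G = {G_n}` is an asymptotically additive sequence of bounded Borel functions. -/
def AsympAdd (φ : M → M) (G : ℕ → M → ℝ) : Prop :=
  (∀ n, Measurable (G n) ∧ ∃ C : ℝ, ∀ x, |G n x| ≤ C) ∧
  ∃ Gk : ℕ → M → ℝ, (∀ k, Continuous (Gk k)) ∧ ApproxSeq φ G Gk

/-- Bowen ball `B_n(x, ε)`. -/
def bowenBall (φ : M → M) (n : ℕ) (x : M) (ε : ℝ) : Set M :=
  {y | ∀ k < n, dist (φ^[k] y) (φ^[k] x) < ε}

/-- `E` is `(ε,n)`-spanning. -/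
def IsSpanning (φ : M → M) (n : ℕ) (ε : ℝ) (E : Finset M) : Prop :=
  ∀ x : M, ∃ y ∈ E, x ∈ bowenBall φ n y ε

/-- `E` is `(ε,n)`-separated. -/
def IsSeparated (φ : M → M) (n : ℕ) (ε : ℝ) (E : Finset M) : Prop :=
  ∀ x ∈ E, ∀ y ∈ E, x ≠ y → x ∉ bowenBall φ n y ε

/-- `S(G,ε,n)`. -/
noncomputable def spanSum (φ : M → M) (G : ℕ → M → ℝ) (ε : ℝ) (n : ℕ) : ℝ≥0∞ :=
  ⨅ (E : Finset M) (_ : IsSpanning φ n ε E), ∑ x ∈ E, ENNReal.ofReal (Real.exp (G n x))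

/-- `N(G,ε,n)`. -/
noncomputable def sepSum (φ : M → M) (G : ℕ → M → ℝ) (ε : ℝ) (n : ℕ) : ℝ≥0∞ :=
  ⨆ (E : Finset M) (_ : IsSeparated φ n ε E), ∑ x ∈ E, ENNReal.ofReal (Real.exp (G n x))

/-- Topological pressure of an asymptotically additive sequence, via `(ε,n)`-separated sets. -/
noncomputable def pressure (φ : M → M) (G : ℕ → M → ℝ) : EReal :=
  ⨆ (ε : ℝ) (_ : 0 < ε),
    Filter.limsup (fun n : ℕ => (((n : ℝ)⁻¹ : ℝ) : EReal) * ENNReal.log (sepSum φ G ε n)) atTop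

/-- Entropy of the partition of `M` induced by a map into a finite type. -/
noncomputable def mapEntropy (μ : Measure M) {α : Type} [Fintype α] (c : M → α) : ℝ :=
  ∑ a : α, Real.negMulLog ((μ (c ⁻¹' {a})).toReal)

/-- Kolmogorov–Sinai entropy of `φ` along a finite partition `P` (encoded as `P : M → Fin m`). -/
noncomputable def partKS (φ : M → M) (μ : Measure M) {m : ℕ} (P : M → Fin m) : ℝ :=
  ⨅ n : ℕ, ((n : ℝ) + 1)⁻¹ *
    mapEntropy μ (fun x => fun i : Fin (n + 1) => P (φ^[(i : ℕ)] x))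

/-- Kolmogorov–Sinai entropy `h_φ(μ)`. -/
noncomputable def ksEntropy (φ : M → M) (μ : Measure M) : ℝ≥0∞ :=
  ⨆ (m : ℕ) (P : M → Fin m) (_ : Measurable P), ENNReal.ofReal (partKS φ μ P)

/-- Set of `n`-periodic points of `φ`. -/
def perSet (φ : M → M) (n : ℕ) : Set M := {x | φ^[n] x = x}

/-- `Z_n(G) = ∑_{x ∈ M_n} e^{G_n(x)}`, as an extended nonnegative real. -/
noncomputable def perPartition (φ : M → M) (G : ℕ → M → ℝ) (n : ℕ) : ℝ≥0∞ :=
  ∑' x : perSet φ n, ENNReal.ofReal (Real.exp (G n x))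

/-- The periodic-orbit measure `P_n = Z_n⁻¹ ∑_{x ∈ M_n} e^{G_n(x)} δ_x`. -/
noncomputable def perGibbs (φ : M → M) (G : ℕ → M → ℝ) (n : ℕ) : Measure M :=
  (perPartition φ G n)⁻¹ •
    Measure.sum (fun x : perSet φ n => ENNReal.ofReal (Real.exp (G n x)) • Measure.dirac (x : M))

/-- Weak periodic specification property. -/
def WPS (φ : M → M) : Prop :=
  ∃ m : ℝ → ℕ → ℕ, ∃ N : ℝ → ℕ,
    (∀ δ : ℝ, 0 < δ → ∀ n, N δ ≤ n → m δ n < n) ∧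
    (∀ δ : ℝ, 0 < δ → ∀ n, N δ ≤ n → ∀ x : M,
      ∃ y ∈ perSet φ n, y ∈ bowenBall φ (n - m δ n) x δ) ∧
    Tendsto (fun δ : ℝ => Filter.limsup (fun n => (m δ n : ℝ≥0∞) / (n : ℝ≥0∞)) atTop)
      (𝓝[>] (0 : ℝ)) (nhds 0)

/-- Specification property (S). -/
def SpecProp (φ : M → M) : Prop :=
  ∀ δ : ℝ, 0 < δ → ∃ N : ℕ, ∀ (r : ℕ) (a b : Fin r → ℕ) (pts : Fin r → M),
    (∀ i, a i ≤ b i) →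
    (∀ i j, i ≠ j → ∀ k, a i ≤ k → k ≤ b i → ∀ l, a j ≤ l → l ≤ b j → N ≤ Nat.dist k l) →
    ∃ x : M, ∀ i, ∀ k, a i ≤ k → k ≤ b i → dist (φ^[k] x) (φ^[k] (pts i)) < δ

/-- Condition (PAP): finitely many periodic points and periodic approximation of pressure. -/
def PAP (φ : M → M) : Prop :=
  (∀ n : ℕ, 0 < n → (perSet φ n).Finite) ∧
  ∀ G : ℕ → M → ℝ, AsympAdd φ G →
    Tendsto (fun n : ℕ => (((n : ℝ)⁻¹ : ℝ) : EReal) * ENNReal.log (perPartition φ G n)) atTop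
      (nhds (pressure φ G))

/-- Condition (USCE): finite topological entropy and upper semicontinuous entropy map. -/
def USCE (φ : M → M) : Prop :=
  pressure φ (fun _ _ => (0 : ℝ)) ≠ ⊤ ∧
  UpperSemicontinuousOn (fun μ : ProbabilityMeasure M => ksEntropy φ (μ : Measure M))
    {μ : ProbabilityMeasure M | (μ : Measure M).map φ = (μ : Measure M)}

/-- Empirical measure `μ_n^x`. -/
noncomputable def empMeas (φ : M → M) (n : ℕ) (x : M) : Measure M :=
  ((n : ℝ≥0∞))⁻¹ • ∑ i ∈ Finset.range n, Measure.dirac (φ^[i] x)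

/-- Weak Gibbs property of `P` for `G`, with (finite, real) pressure `p`. -/
def WeakGibbs (φ : M → M) (G : ℕ → M → ℝ) (p : ℝ) (P : Measure M) : Prop :=
  ∃ K : ℕ → ℝ → ℝ,
    (∀ n : ℕ, ∀ ε : ℝ, 0 < ε → 1 ≤ K n ε) ∧
    (∀ n : ℕ, 0 < n → ∀ ε : ℝ, 0 < ε → ∀ x : M,
      ENNReal.ofReal (Real.exp (G n x - n * p)) / ENNReal.ofReal (K n ε)
          ≤ P (bowenBall φ n x ε) ∧
      P (bowenBall φ n x ε)
          ≤ ENNReal.ofReal (K n ε) * ENNReal.ofReal (Real.exp (G n x - n * p))) ∧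
    Tendsto (fun ε : ℝ => Filter.limsup (fun n => ENNReal.ofReal (Real.log (K n ε) / n)) atTop)
      (𝓝[>] (0 : ℝ)) (nhds 0)

/-- **Asymptotically additive sequences have tempered variation:**
`lim_{δ↓0} limsup_{n→∞} sup_{x ∈ M} sup_{y,z ∈ B_n(x,δ)} (1/n)|G_n(y) − G_n(z)| = 0`. -/
theorem asympAdd_temperedVariation
    {M : Type*} [MetricSpace M] [CompactSpace M] [MeasurableSpace M] [BorelSpace M]
    (φ : M → M) (hφ : Continuous φ)
    (G : ℕ → M → ℝ) (hG : AsympAdd φ G) :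
    Tendsto
      (fun δ : ℝ => Filter.limsup
        (fun n : ℕ =>
          ⨆ x : M, ⨆ y ∈ bowenBall φ n x δ, ⨆ z ∈ bowenBall φ n x δ,
            ENNReal.ofReal (|G n y - G n z| / n)) atTop)
      (𝓝[>] (0 : ℝ)) (nhds 0) := by
  obtain ⟨-, Gk, hcont, happrox⟩ := hG
  rw [ENNReal.tendsto_nhds_zero]
  intro ε hε
  set ε' : ℝ≥0∞ := min ε 1 with hε'def
  have hε'pos : 0 < ε' := lt_min hε zero_lt_one
  have hε'top : ε' ≠ ⊤ := ne_top_of_le_ne_top ENNReal.one_ne_top (min_le_right _ _)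
  have h4 : (0 : ℝ≥0∞) < ε' / 4 := ENNReal.div_pos hε'pos.ne' (by norm_num)
  -- choose k
  obtain ⟨k, hk⟩ := (happrox.eventually (gt_mem_nhds h4)).exists
  -- r > 0 with ofReal r ≤ ε'/2
  set r : ℝ := (ε' / 2).toReal with hrdef
  have hhalf_top : ε' / 2 ≠ ⊤ := by
    simp [ENNReal.div_eq_top, hε'top]
  have hr : (0 : ℝ) < r :=
    ENNReal.toReal_pos (by simp [ENNReal.div_eq_zero_iff, hε'pos.ne']) hhalf_top
  have hofr : ENNReal.ofReal r = ε' / 2 := ENNReal.ofReal_toReal hhalf_top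
  -- uniform continuity of Gk k
  have hUC : UniformContinuous (Gk k) := CompactSpace.uniformContinuous_of_continuous (hcont k)
  obtain ⟨δ0, hδ0, hδ0spec⟩ := Metric.uniformContinuous_iff.1 hUC r hr
  -- the eventual region in δ
  refine Filter.eventually_of_mem (Ioo_mem_nhdsGT_of_mem ⟨le_rfl, half_pos hδ0⟩) ?_
  rintro δ ⟨hδpos, hδlt⟩
  set D : ℕ → M → ℝ := fun n x => G n x - birkhoff φ (Gk k) n x with hD
  set A : ℕ → ℝ≥0∞ := fun n => supNorm (D n) / (n : ℝ≥0∞) with hA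
  -- pointwise bound
  have key : ∀ n : ℕ, (⨆ x : M, ⨆ y ∈ bowenBall φ n x δ, ⨆ z ∈ bowenBall φ n x δ,
      ENNReal.ofReal (|G n y - G n z| / n)) ≤ A n + A n + ENNReal.ofReal r := by
    intro n
    refine iSup_le fun x => iSup_le fun y => iSup_le fun hy => iSup_le fun z =>
      iSup_le fun hz => ?_
    rcases Nat.eq_zero_or_pos n with rfl | hn
    · simp
    have hnR : (0 : ℝ) < (n : ℝ) := Nat.cast_pos.2 hn
    -- Birkhoff sum difference bound
    have hsum : |birkhoff φ (Gk k) n y - birkhoff φ (Gk k) n z| ≤ n * r := by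
      rw [birkhoff, birkhoff, ← Finset.sum_sub_distrib]
      calc |∑ j ∈ Finset.range n, (Gk k (φ^[j] y) - Gk k (φ^[j] z))|
          ≤ ∑ j ∈ Finset.range n, |Gk k (φ^[j] y) - Gk k (φ^[j] z)| :=
            Finset.abs_sum_le_sum_abs _ _
        _ ≤ ∑ _j ∈ Finset.range n, r := by
            refine Finset.sum_le_sum fun j hj => ?_
            have hj' := Finset.mem_range.1 hj
            have hd : dist (φ^[j] y) (φ^[j] z) < δ0 := by
              calc dist (φ^[j] y) (φ^[j] z)
                  ≤ dist (φ^[j] y) (φ^[j] x) + dist (φ^[j] x) (φ^[j] z) := dist_triangle _ _ _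
                _ < δ + δ := add_lt_add (hy j hj')
                    (by rw [dist_comm]; exact hz j hj')
                _ ≤ δ0 := by linarith
            have h2 := hδ0spec hd
            rw [Real.dist_eq] at h2
            exact h2.le
        _ = n * r := by simp [mul_comm]
    have habs : |G n y - G n z| ≤ |D n y| + |D n z| + n * r := by
      have : G n y - G n z = D n y - D n z +
          (birkhoff φ (Gk k) n y - birkhoff φ (Gk k) n z) := by simp [hD]; ring
      rw [this]
      calc |D n y - D n z + (birkhoff φ (Gk k) n y - birkhoff φ (Gk k) n z)|
          ≤ |D n y - D n z| + |birkhoff φ (Gk k) n y - birkhoff φ (Gk k) n z| := abs_add_le _ _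
        _ ≤ (|D n y| + |D n z|) + n * r := add_le_add (abs_sub _ _) hsum
    have hdiv : |G n y - G n z| / n ≤ |D n y| / n + |D n z| / n + r := by
      rw [div_le_iff₀ hnR]
      calc |G n y - G n z| ≤ |D n y| + |D n z| + n * r := habs
        _ = (|D n y| / n + |D n z| / n + r) * n := by field_simp
    calc ENNReal.ofReal (|G n y - G n z| / n)
        ≤ ENNReal.ofReal (|D n y| / n + |D n z| / n + r) := ENNReal.ofReal_le_ofReal hdiv
      _ ≤ ENNReal.ofReal (|D n y| / n + |D n z| / n) + ENNReal.ofReal r :=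
          ENNReal.ofReal_add_le
      _ ≤ (ENNReal.ofReal (|D n y| / n) + ENNReal.ofReal (|D n z| / n)) + ENNReal.ofReal r :=
          add_le_add_left ENNReal.ofReal_add_le _
      _ ≤ A n + A n + ENNReal.ofReal r := by
          refine add_le_add_left (add_le_add ?_ ?_) _ <;>
          · rw [ENNReal.ofReal_div_of_pos hnR, ENNReal.ofReal_natCast]
            exact ENNReal.div_le_div_right (le_iSup (fun w => ENNReal.ofReal (|D n w|)) _) _
  -- finish
  have hAev : ∀ᶠ n in atTop, A n < ε' / 4 := eventually_lt_of_limsup_lt hk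
  have hlim : Filter.limsup (fun n : ℕ =>
      ⨆ x : M, ⨆ y ∈ bowenBall φ n x δ, ⨆ z ∈ bowenBall φ n x δ,
        ENNReal.ofReal (|G n y - G n z| / n)) atTop ≤ ε' := by
    refine limsup_le_of_le (by isBoundedDefault) ?_
    filter_upwards [hAev] with n hAn
    refine (key n).trans ?_
    calc A n + A n + ENNReal.ofReal r ≤ ε' / 4 + ε' / 4 + ε' / 2 := by
          rw [hofr]; exact add_le_add (add_le_add hAn.le hAn.le) le_rfl
      _ = ε' := by
          have h24 : ε' / 4 = ε' / 2 / 2 := by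
            rw [div_eq_mul_inv, div_eq_mul_inv, div_eq_mul_inv, mul_assoc,
              ← ENNReal.mul_inv (by norm_num) (by norm_num)]
            norm_num
          rw [h24, ENNReal.add_halves, ENNReal.add_halves]
  exact hlim.trans (min_le_left _ _)
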